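/- The vector f ∈ ℝ^m defined by f^s = Q_s / (Σ_{s'=1}^m Q_{s'}) for 1 ≤ s ≤ m is a stationary distribution of the exogenous innovation–imitation model: every entry of f is nonnegative, Σ_{s=1}^m f^s = 1, and A f = f. -/

import Mathlib

/-- The transition matrix of the exogenous innovation–imitation model
(0-indexed: level `i : Fin m` corresponds to productivity level `i+1`).
`A_{1,1} = a + q_1(1-a)`, `A_{i,1} = q_i(1-a)` for `i ≥ 2`, `A_{i,i} = a`
for `i ≥ 2`, `A_{i,i+1} = 1-a`, all other entries `0`. -/
def transMatrix (m : ℕ) (a : ℝ) (q : Fin m → ℝ) : Matrix (Fin m) (Fin m) ℝ :=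
  fun i j =>
    (if (j : ℕ) = 0 then q i * (1 - a) else 0) +
    (if i = j then a else 0) +
    (if (j : ℕ) = (i : ℕ) + 1 then 1 - a else 0)

/-- `Q_s = q_s + q_{s+1} + ⋯ + q_m` (0-indexed). -/
def tailQ (m : ℕ) (q : Fin m → ℝ) (s : Fin m) : ℝ := ∑ j ∈ Finset.Ici s, q j

/-- A stationary distribution of the exogenous innovation–imitation model:
nonnegative entries summing to `1` with `A f = f`. -/
def IsStationaryDistrib (m : ℕ) (a : ℝ) (q : Fin m → ℝ) (f : Fin m → ℝ) : Prop :=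
  (∀ i, 0 ≤ f i) ∧ (∑ i, f i = 1) ∧ (transMatrix m a q).mulVec f = f

theorem stmt0 (m : ℕ) (hm : 1 ≤ m) (a : ℝ) (ha : a ∈ Set.Ioo (0 : ℝ) 1)
    (q : Fin m → ℝ) (hq : ∀ i, q i ∈ Set.Icc (0 : ℝ) 1) (hqsum : ∑ i, q i = 1) :
    IsStationaryDistrib m a q (fun s => tailQ m q s / ∑ s', tailQ m q s') := by
  obtain ⟨ha0, ha1⟩ := ha
  have hi0 : (0:ℕ) < m := hm
  have hQnn : ∀ s, 0 ≤ tailQ m q s := fun s =>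
    Finset.sum_nonneg fun j _ => (hq j).1
  have hQ0 : tailQ m q ⟨0, hi0⟩ = 1 := by
    rw [tailQ, ← hqsum]
    apply Finset.sum_congr _ (fun _ _ => rfl)
    ext j; simp [Fin.le_def]
  set S := ∑ s', tailQ m q s' with hSdef
  have hSpos : 0 < S := by
    calc (0:ℝ) < 1 := one_pos
    _ = tailQ m q ⟨0,hi0⟩ := hQ0.symm
    _ ≤ S := Finset.single_le_sum (fun s _ => hQnn s) (Finset.mem_univ _)
  refine ⟨fun i => div_nonneg (hQnn i) hSpos.le, ?_, ?_⟩
  · rw [hSdef, ← Finset.sum_div]; exact div_self hSpos.ne'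
  · funext i
    simp only [Matrix.mulVec, dotProduct]
    have expand : ∀ j : Fin m, transMatrix m a q i j * (tailQ m q j / S) =
        (if (j:ℕ) = 0 then q i * (1 - a) * (tailQ m q j / S) else 0) +
        ((if i = j then a * (tailQ m q j / S) else 0) +
        (if (j:ℕ) = (i:ℕ) + 1 then (1 - a) * (tailQ m q j / S) else 0)) := by
      intro j
      simp only [transMatrix, add_mul, ite_mul, zero_mul, add_assoc]
    rw [Finset.sum_congr rfl (fun j _ => expand j), Finset.sum_add_distrib,
      Finset.sum_add_distrib]
    have h1 : (∑ j : Fin m, if (j:ℕ) = 0 then q i * (1 - a) * (tailQ m q j / S) else 0)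
        = q i * (1 - a) * (tailQ m q ⟨0, hi0⟩ / S) := by
      rw [Finset.sum_eq_single (⟨0, hi0⟩ : Fin m)]
      · simp
      · intro b _ hb
        rw [if_neg (by simpa [Fin.ext_iff] using hb)]
      · intro h; exact absurd (Finset.mem_univ _) h
    have h2 : (∑ j : Fin m, if i = j then a * (tailQ m q j / S) else 0)
        = a * (tailQ m q i / S) := by
      simp
    rw [h1, h2, hQ0]
    by_cases hlt : (i:ℕ) + 1 < m
    · set jj : Fin m := ⟨(i:ℕ)+1, hlt⟩ with hj
      have h3 : (∑ j : Fin m, if (j:ℕ) = (i:ℕ) + 1 then (1 - a) * (tailQ m q j / S) else 0)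
          = (1 - a) * (tailQ m q jj / S) := by
        rw [Finset.sum_eq_single jj]
        · simp [hj]
        · intro b _ hb
          rw [if_neg (by simpa [hj, Fin.ext_iff] using hb)]
        · intro h; exact absurd (Finset.mem_univ _) h
      have hrec : tailQ m q i = q i + tailQ m q jj := by
        rw [tailQ, tailQ, show Finset.Ici i = insert i (Finset.Ici jj) by
          ext k
          simp only [Finset.mem_insert, Finset.mem_Ici, hj, Fin.le_def, Fin.ext_iff]
          omega]
        rw [Finset.sum_insert (by simp [hj, Fin.le_def])]
      rw [h3, hrec]
      field_simp
      ring
    · have h3 : (∑ j : Fin m, if (j:ℕ) = (i:ℕ) + 1 then (1 - a) * (tailQ m q j / S) else 0)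
          = 0 :=
        Finset.sum_eq_zero fun b _ => if_neg (fun h => hlt (by rw [← h]; exact b.isLt))
      have hlast : tailQ m q i = q i := by
        rw [tailQ, show Finset.Ici i = {i} by
          ext k
          simp only [Finset.mem_singleton, Finset.mem_Ici, Fin.le_def, Fin.ext_iff]
          have := k.isLt
          omega]
        simp
      rw [h3, hlast]
      field_simp
      ring
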